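/- Let M be a set of probability densities on the k-simplex Θ such that the predictive probabilities of a dataset x' ∈ X^{n'} are maximally imprecise a priori, i.e., inf_{p∈M} ∫ ∏_i θ_i^{n_i'} p(θ) dθ = 0 and sup_{p∈M} ∫ ∏_i θ_i^{n_i'} p(θ) dθ = ∏_i (n_i'/n')^{n_i'}, where n' = (n_1',…,n_k') are the frequencies of x'. If the likelihood L(θ) of the observed manifest data is continuous and strictly positive on Θ, then the posterior predictive probabilities are also maximally imprecise: inf_{p∈M} E_p(∏_i θ_i^{n_i'} | L) = 0 and sup_{p∈M} E_p(∏_i θ_i^{n_i'} | L) = ∏_i (n_i'/n')^{n_i'}. -/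

import Mathlib

open MeasureTheory Set Filter Topology

/-- Weighted AM-GM specialized to the simplex: `∏ θᵢ^{nᵢ} ≤ ∏ (nᵢ/N)^{nᵢ}`. -/
lemma amgm_aux {k : ℕ} (n' : Fin k → ℕ) (N : ℕ) (hN : N = ∑ i, n' i) (hNpos : 0 < N)
    {θ : Fin k → ℝ} (hθ0 : ∀ i, 0 ≤ θ i) (hθ1 : ∑ i, θ i = 1) :
    ∏ i, θ i ^ n' i ≤ ∏ i, ((n' i : ℝ) / N) ^ n' i := by
  have hN0 : (N : ℝ) ≠ 0 := Nat.cast_ne_zero.2 hNpos.ne'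
  set w : Fin k → ℝ := fun i => (n' i : ℝ) / N with hwdef
  set z : Fin k → ℝ := fun i => if n' i = 0 then 1 else θ i * N / n' i with hzdef
  have hwnn : ∀ i, 0 ≤ w i := fun i => div_nonneg (Nat.cast_nonneg _) (Nat.cast_nonneg _)
  have hznn : ∀ i, 0 ≤ z i := by
    intro i
    simp only [hzdef]
    split
    · norm_num
    · have := hθ0 i
      positivity
  have hw1 : ∑ i, w i = 1 := by
    simp only [hwdef]
    rw [← Finset.sum_div, ← Nat.cast_sum, ← hN, div_self hN0]
  have key := Real.geom_mean_le_arith_mean_weighted Finset.univ w z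
    (fun i _ => hwnn i) hw1 (fun i _ => hznn i)
  have hsum : ∑ i, w i * z i ≤ 1 := by
    rw [← hθ1]
    refine Finset.sum_le_sum fun i _ => ?_
    by_cases h : n' i = 0
    · simp only [hwdef, hzdef, h]
      simp [hθ0 i]
    · have hni : (n' i : ℝ) ≠ 0 := Nat.cast_ne_zero.2 h
      simp only [hwdef, hzdef, if_neg h]
      have : (n' i : ℝ) / N * (θ i * N / n' i) = θ i := by field_simp
      exact this.le
  have hprodnn : 0 ≤ ∏ i, z i ^ w i :=
    Finset.prod_nonneg fun i _ => Real.rpow_nonneg (hznn i) _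
  have hA : (∏ i, z i ^ w i) ^ N ≤ 1 := pow_le_one₀ hprodnn (key.trans hsum)
  have hzpow : (∏ i, z i ^ w i) ^ N = ∏ i, z i ^ n' i := by
    rw [← Finset.prod_pow]
    refine Finset.prod_congr rfl fun i _ => ?_
    rw [← Real.rpow_natCast (z i ^ w i) N, ← Real.rpow_mul (hznn i)]
    by_cases h : n' i = 0
    · simp [hwdef, h]
    · have : w i * N = (n' i : ℝ) := by
        simp only [hwdef]; field_simp
      rw [this, Real.rpow_natCast]
  have hz1 : ∏ i, z i ^ n' i ≤ 1 := by rw [← hzpow]; exact hA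
  have hfin : ∏ i, θ i ^ n' i = (∏ i, w i ^ n' i) * ∏ i, z i ^ n' i := by
    rw [← Finset.prod_mul_distrib]
    refine Finset.prod_congr rfl fun i _ => ?_
    by_cases h : n' i = 0
    · simp [h]
    · have hni : (n' i : ℝ) ≠ 0 := Nat.cast_ne_zero.2 h
      rw [← mul_pow]
      congr 1
      simp only [hwdef, hzdef, if_neg h]
      field_simp
  calc ∏ i, θ i ^ n' i = (∏ i, w i ^ n' i) * ∏ i, z i ^ n' i := hfin
    _ ≤ (∏ i, w i ^ n' i) * 1 := by
        refine mul_le_mul_of_nonneg_left hz1 ?_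
        exact Finset.prod_nonneg fun i _ => pow_nonneg (hwnn i) _
    _ = ∏ i, ((n' i : ℝ) / N) ^ n' i := by rw [mul_one]

/-- If the prior predictive probabilities of a dataset with frequencies `n'` are
maximally imprecise (lower `0`, upper `∏_i (n_i'/n')^{n_i'}`) and the likelihood `L`
of the manifest data is continuous and strictly positive on the simplex, then the
posterior predictive probabilities are also maximally imprecise. -/
theorem stmt_11 (k : ℕ) (hk : 0 < k)
    (μ : Measure (Fin k → ℝ))
    (hsupp : ∀ᵐ θ ∂μ, θ ∈ stdSimplex ℝ (Fin k))
    (M : Set ((Fin k → ℝ) → ℝ))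
    (hM : ∀ p ∈ M, (∀ θ, 0 ≤ p θ) ∧ Integrable p μ ∧ ∫ θ, p θ ∂μ = 1)
    (n' : Fin k → ℕ) (N : ℕ) (hN : N = ∑ i, n' i) (hNpos : 0 < N)
    (L : (Fin k → ℝ) → ℝ) (hL : ContinuousOn L (stdSimplex ℝ (Fin k)))
    (hLpos : ∀ θ ∈ stdSimplex ℝ (Fin k), 0 < L θ)
    (hpriorinf : sInf ((fun p => ∫ θ, (∏ i, θ i ^ n' i) * p θ ∂μ) '' M) = 0)
    (hpriorsup : sSup ((fun p => ∫ θ, (∏ i, θ i ^ n' i) * p θ ∂μ) '' M)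
        = ∏ i, ((n' i : ℝ) / N) ^ n' i) :
    sInf ((fun p => (∫ θ, (∏ i, θ i ^ n' i) * L θ * p θ ∂μ) /
        ∫ θ, L θ * p θ ∂μ) '' M) = 0 ∧
    sSup ((fun p => (∫ θ, (∏ i, θ i ^ n' i) * L θ * p θ ∂μ) /
        ∫ θ, L θ * p θ ∂μ) '' M) = ∏ i, ((n' i : ℝ) / N) ^ n' i := by
  set S : Set (Fin k → ℝ) := stdSimplex ℝ (Fin k) with hSdef
  set f : (Fin k → ℝ) → ℝ := fun θ => ∏ i, θ i ^ n' i with hfdef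
  set C : ℝ := ∏ i, ((n' i : ℝ) / N) ^ n' i with hCdef
  have hC0 : 0 < C := by
    refine Finset.prod_pos fun i _ => ?_
    by_cases h : n' i = 0
    · simp [h]
    · have h1 : (0:ℝ) < n' i := by exact_mod_cast Nat.pos_of_ne_zero h
      have h2 : (0:ℝ) < N := by exact_mod_cast hNpos
      exact pow_pos (div_pos h1 h2) _
  -- bounds on f over the simplex
  have hf_nonneg : ∀ θ ∈ S, 0 ≤ f θ := fun θ hθ =>
    Finset.prod_nonneg fun i _ => pow_nonneg (hθ.1 i) _
  have hf_le : ∀ θ ∈ S, f θ ≤ C := fun θ hθ => amgm_aux n' N hN hNpos hθ.1 hθ.2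
  -- min and max of L on the simplex
  have hSne : S.Nonempty := ⟨_, ite_eq_mem_stdSimplex ℝ (⟨0, hk⟩ : Fin k)⟩
  obtain ⟨θm, hθmS, hmin⟩ := (isCompact_stdSimplex ℝ (Fin k)).exists_isMinOn hSne hL
  obtain ⟨θM, hθMS, hmax⟩ := (isCompact_stdSimplex ℝ (Fin k)).exists_isMaxOn hSne hL
  set m : ℝ := L θm with hmdef
  set B : ℝ := L θM with hBdef
  have hm0 : 0 < m := hLpos _ hθmS
  have hB0 : 0 < B := hLpos _ hθMS
  have hmB : m ≤ B := hmax hθmS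
  have hmle : ∀ θ ∈ S, m ≤ L θ := fun θ hθ => hmin hθ
  have hBle : ∀ θ ∈ S, L θ ≤ B := fun θ hθ => hmax hθ
  -- measurability
  have hSmeas : MeasurableSet S := (isClosed_stdSimplex ℝ (Fin k)).measurableSet
  have hLmeas : AEMeasurable L μ := by
    have h : AEMeasurable L (μ.restrict S) := hL.aemeasurable hSmeas
    rwa [Measure.restrict_eq_self_of_ae_mem hsupp] at h
  have hfcont : Continuous f := by
    apply continuous_finset_prod
    exact fun i _ => (continuous_apply i).pow _
  -- facts for each p ∈ M
  have key : ∀ p ∈ M,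
      0 ≤ (∫ θ, f θ * L θ * p θ ∂μ) / ∫ θ, L θ * p θ ∂μ ∧
      (∫ θ, f θ * L θ * p θ ∂μ) / ∫ θ, L θ * p θ ∂μ ≤ C ∧
      (∫ θ, f θ * L θ * p θ ∂μ) / ∫ θ, L θ * p θ ∂μ ≤ B / m * ∫ θ, f θ * p θ ∂μ ∧
      C - (∫ θ, f θ * L θ * p θ ∂μ) / ∫ θ, L θ * p θ ∂μ
        ≤ B / m * (C - ∫ θ, f θ * p θ ∂μ) := by
    intro p hp
    obtain ⟨hp0, hpInt, hp1⟩ := hM p hp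
    have hpmeas : AEMeasurable p μ := hpInt.aemeasurable
    -- integrability
    have hLp_int : Integrable (fun θ => L θ * p θ) μ := by
      refine Integrable.mono' (hpInt.const_mul B) ((hLmeas.mul hpmeas).aestronglyMeasurable) ?_
      filter_upwards [hsupp] with θ hθ
      rw [Real.norm_eq_abs, abs_of_nonneg (mul_nonneg (hLpos θ hθ).le (hp0 θ))]
      exact mul_le_mul_of_nonneg_right (hBle θ hθ) (hp0 θ)
    have hfLp_int : Integrable (fun θ => f θ * L θ * p θ) μ := by
      refine Integrable.mono' ((hpInt.const_mul (C * B)))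
        (((hfcont.aemeasurable.mul hLmeas).mul hpmeas).aestronglyMeasurable) ?_
      filter_upwards [hsupp] with θ hθ
      rw [Real.norm_eq_abs, abs_of_nonneg (mul_nonneg (mul_nonneg (hf_nonneg θ hθ)
        (hLpos θ hθ).le) (hp0 θ))]
      calc f θ * L θ * p θ ≤ C * B * p θ := by
            refine mul_le_mul_of_nonneg_right ?_ (hp0 θ)
            exact mul_le_mul (hf_le θ hθ) (hBle θ hθ) (hLpos θ hθ).le hC0.le
        _ = C * B * p θ := rfl
    have hfp_int : Integrable (fun θ => f θ * p θ) μ := by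
      refine Integrable.mono' (hpInt.const_mul C)
        ((hfcont.aemeasurable.mul hpmeas).aestronglyMeasurable) ?_
      filter_upwards [hsupp] with θ hθ
      rw [Real.norm_eq_abs, abs_of_nonneg (mul_nonneg (hf_nonneg θ hθ) (hp0 θ))]
      exact mul_le_mul_of_nonneg_right (hf_le θ hθ) (hp0 θ)
    -- basic integral facts
    have hIfp_nonneg : 0 ≤ ∫ θ, f θ * p θ ∂μ := by
      refine integral_nonneg_of_ae ?_
      filter_upwards [hsupp] with θ hθ
      exact mul_nonneg (hf_nonneg θ hθ) (hp0 θ)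
    have hIfLp_nonneg : 0 ≤ ∫ θ, f θ * L θ * p θ ∂μ := by
      refine integral_nonneg_of_ae ?_
      filter_upwards [hsupp] with θ hθ
      exact mul_nonneg (mul_nonneg (hf_nonneg θ hθ) (hLpos θ hθ).le) (hp0 θ)
    have hILp_ge : m ≤ ∫ θ, L θ * p θ ∂μ := by
      have h := integral_mono_ae (hpInt.const_mul m) hLp_int ?_
      · rwa [integral_const_mul, hp1, mul_one] at h
      · filter_upwards [hsupp] with θ hθ
        exact mul_le_mul_of_nonneg_right (hmle θ hθ) (hp0 θ)
    have hILp_pos : 0 < ∫ θ, L θ * p θ ∂μ := lt_of_lt_of_le hm0 hILp_ge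
    have hd : ∫ θ, f θ * L θ * p θ ∂μ ≤ B * ∫ θ, f θ * p θ ∂μ := by
      have h := integral_mono_ae hfLp_int (hfp_int.const_mul B) ?_
      · rwa [integral_const_mul] at h
      · filter_upwards [hsupp] with θ hθ
        calc f θ * L θ * p θ ≤ f θ * B * p θ := by
              refine mul_le_mul_of_nonneg_right ?_ (hp0 θ)
              exact mul_le_mul_of_nonneg_left (hBle θ hθ) (hf_nonneg θ hθ)
          _ = B * (f θ * p θ) := by ring
    have hfC : ∫ θ, f θ * L θ * p θ ∂μ ≤ C * ∫ θ, L θ * p θ ∂μ := by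
      have h := integral_mono_ae hfLp_int (hLp_int.const_mul C) ?_
      · rwa [integral_const_mul] at h
      · filter_upwards [hsupp] with θ hθ
        calc f θ * L θ * p θ ≤ C * (L θ * p θ) := by
              rw [← mul_assoc]
              refine mul_le_mul_of_nonneg_right ?_ (hp0 θ)
              exact mul_le_mul_of_nonneg_right (hf_le θ hθ) (hLpos θ hθ).le
          _ = C * (L θ * p θ) := rfl
    have he : C * ∫ θ, L θ * p θ ∂μ - ∫ θ, f θ * L θ * p θ ∂μ
        ≤ B * (C - ∫ θ, f θ * p θ ∂μ) := by
      have hsub1 : Integrable (fun θ => C * (L θ * p θ) - f θ * L θ * p θ) μ :=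
        (hLp_int.const_mul C).sub hfLp_int
      have hsub2 : Integrable (fun θ => B * (C * p θ - f θ * p θ)) μ :=
        ((hpInt.const_mul C).sub hfp_int).const_mul B
      have h := integral_mono_ae hsub1 hsub2 ?_
      · rw [integral_sub (hLp_int.const_mul C) hfLp_int, integral_const_mul,
          integral_const_mul, integral_sub (hpInt.const_mul C) hfp_int,
          integral_const_mul, hp1, mul_one] at h
        linarith
      · filter_upwards [hsupp] with θ hθ
        have h1 : 0 ≤ C - f θ := sub_nonneg.2 (hf_le θ hθ)
        have hgt : (C - f θ) * L θ * p θ ≤ B * ((C - f θ) * p θ) := by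
          calc (C - f θ) * L θ * p θ ≤ (C - f θ) * B * p θ := by
                refine mul_le_mul_of_nonneg_right ?_ (hp0 θ)
                exact mul_le_mul_of_nonneg_left (hBle θ hθ) h1
            _ = B * ((C - f θ) * p θ) := by ring
        calc C * (L θ * p θ) - f θ * L θ * p θ = (C - f θ) * L θ * p θ := by ring
          _ ≤ B * ((C - f θ) * p θ) := hgt
          _ = B * (C * p θ - f θ * p θ) := by ring
    refine ⟨div_nonneg hIfLp_nonneg hILp_pos.le, ?_, ?_, ?_⟩
    · rw [div_le_iff₀ hILp_pos]
      calc ∫ θ, f θ * L θ * p θ ∂μ ≤ C * ∫ θ, L θ * p θ ∂μ := hfC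
        _ = _ := rfl
    · calc (∫ θ, f θ * L θ * p θ ∂μ) / ∫ θ, L θ * p θ ∂μ
          ≤ (∫ θ, f θ * L θ * p θ ∂μ) / m :=
            div_le_div_of_nonneg_left hIfLp_nonneg hm0 hILp_ge |>.trans_eq rfl
        _ ≤ (B * ∫ θ, f θ * p θ ∂μ) / m := by
            exact div_le_div_of_nonneg_right hd hm0.le |>.trans_eq rfl
        _ = B / m * ∫ θ, f θ * p θ ∂μ := by ring
    · have hnum : 0 ≤ C * (∫ θ, L θ * p θ ∂μ) - ∫ θ, f θ * L θ * p θ ∂μ :=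
        sub_nonneg.2 hfC
      have h1 : C - (∫ θ, f θ * L θ * p θ ∂μ) / ∫ θ, L θ * p θ ∂μ
          = (C * (∫ θ, L θ * p θ ∂μ) - ∫ θ, f θ * L θ * p θ ∂μ) / ∫ θ, L θ * p θ ∂μ := by
        field_simp
      rw [h1]
      calc (C * (∫ θ, L θ * p θ ∂μ) - ∫ θ, f θ * L θ * p θ ∂μ) / ∫ θ, L θ * p θ ∂μ
          ≤ (C * (∫ θ, L θ * p θ ∂μ) - ∫ θ, f θ * L θ * p θ ∂μ) / m :=
            div_le_div_of_nonneg_left hnum hm0 hILp_ge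
        _ ≤ (B * (C - ∫ θ, f θ * p θ ∂μ)) / m := div_le_div_of_nonneg_right he hm0.le
        _ = B / m * (C - ∫ θ, f θ * p θ ∂μ) := by ring
  -- the prior predictive set
  set PriorS := (fun p => ∫ θ, f θ * p θ ∂μ) '' M with hPriorS
  have hMne : M.Nonempty := by
    by_contra h
    rw [Set.not_nonempty_iff_eq_empty] at h
    rw [hPriorS, h, Set.image_empty, Real.sSup_empty] at hpriorsup
    exact absurd hpriorsup.symm hC0.ne'
  have hPriorne : PriorS.Nonempty := hMne.image _
  -- the posterior predictive set
  set PostS := (fun p => (∫ θ, f θ * L θ * p θ ∂μ) / ∫ θ, L θ * p θ ∂μ) '' M with hPostS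
  have hPostne : PostS.Nonempty := hMne.image _
  have hPost0 : ∀ x ∈ PostS, 0 ≤ x := by
    rintro x ⟨p, hp, rfl⟩; exact (key p hp).1
  have hPostC : ∀ x ∈ PostS, x ≤ C := by
    rintro x ⟨p, hp, rfl⟩; exact (key p hp).2.1
  have hBm : 0 < B / m := div_pos hB0 hm0
  constructor
  · refine csInf_eq_of_forall_ge_of_forall_gt_exists_lt hPostne hPost0 fun w hw => ?_
    have hε : 0 < m / B * w := mul_pos (div_pos hm0 hB0) hw
    have := hpriorinf ▸ hε
    obtain ⟨y, ⟨p, hp, rfl⟩, hy⟩ := exists_lt_of_csInf_lt hPriorne (by rw [hpriorinf]; exact hε)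
    refine ⟨_, ⟨p, hp, rfl⟩, ?_⟩
    have h := (key p hp).2.2.1
    have : B / m * ∫ θ, f θ * p θ ∂μ < B / m * (m / B * w) :=
      mul_lt_mul_of_pos_left hy hBm
    have hBmw : B / m * (m / B * w) = w := by field_simp
    calc (∫ θ, f θ * L θ * p θ ∂μ) / ∫ θ, L θ * p θ ∂μ
        ≤ B / m * ∫ θ, f θ * p θ ∂μ := h
      _ < w := by rw [← hBmw]; exact this
  · refine csSup_eq_of_forall_le_of_forall_lt_exists_gt hPostne hPostC fun w hw => ?_
    have hε : 0 < C - w := sub_pos.2 hw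
    have hlt : C - m / B * (C - w) < C := by
      have : 0 < m / B * (C - w) := mul_pos (div_pos hm0 hB0) hε
      linarith
    obtain ⟨y, ⟨p, hp, rfl⟩, hy⟩ := exists_lt_of_lt_csSup hPriorne
      (by rw [hpriorsup]; exact hlt)
    refine ⟨_, ⟨p, hp, rfl⟩, ?_⟩
    have h := (key p hp).2.2.2
    have h2 : C - ∫ θ, f θ * p θ ∂μ < m / B * (C - w) := by linarith
    have h3 : B / m * (C - ∫ θ, f θ * p θ ∂μ) < B / m * (m / B * (C - w)) :=
      mul_lt_mul_of_pos_left h2 hBm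
    have h4 : B / m * (m / B * (C - w)) = C - w := by field_simp
    have h5 : C - (∫ θ, f θ * L θ * p θ ∂μ) / ∫ θ, L θ * p θ ∂μ < C - w := by
      calc C - (∫ θ, f θ * L θ * p θ ∂μ) / ∫ θ, L θ * p θ ∂μ
          ≤ B / m * (C - ∫ θ, f θ * p θ ∂μ) := h
        _ < C - w := by rw [← h4]; exact h3
    linarith
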